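/- Let k, E⋆, S⋆, β, γ be real constants and let A, I : ℝ → ℝ be arbitrary functions. Suppose E, S : ℝ → ℝ are differentiable and for every t satisfy E'(t) = −k·(E(t) − E⋆) + β·A(t)·I(t)·E(t)·S(t) − γ·E(t)·S(t) and S'(t) = −k·(S(t) − S⋆) − β·A(t)·I(t)·E(t)·S(t) + γ·E(t)·S(t). If the initial total population satisfies E(0) + S(0) = E⋆ + S⋆, then the total T cell population is conserved: E(t) + S(t) = E⋆ + S⋆ for all t. -/

import Mathlib

/-- If the initial total T cell population equals E⋆ + S⋆, then
the total population is conserved for all time. -/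
theorem total_Tcell_conserved
    (k Estar Sstar β γ : ℝ) (A I : ℝ → ℝ) (E S : ℝ → ℝ)
    (hE : ∀ t : ℝ, HasDerivAt E
      (-k * (E t - Estar) + β * A t * I t * E t * S t - γ * E t * S t) t)
    (hS : ∀ t : ℝ, HasDerivAt S
      (-k * (S t - Sstar) - β * A t * I t * E t * S t + γ * E t * S t) t)
    (h0 : E 0 + S 0 = Estar + Sstar) :
    ∀ t : ℝ, E t + S t = Estar + Sstar := by
  set f : ℝ → ℝ := fun t => (E t + S t - Estar - Sstar) * Real.exp (k * t) with hf
  have hderiv : ∀ t : ℝ, HasDerivAt f 0 t := by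
    intro t
    have h1 := (hE t).add (hS t)
    have h2 : HasDerivAt (fun t => E t + S t - Estar - Sstar)
        (-k * (E t + S t - Estar - Sstar)) t := by
      have := (h1.sub_const Estar).sub_const Sstar
      exact this.congr_deriv (by ring)
    have h3 : HasDerivAt (fun t => Real.exp (k * t)) (k * Real.exp (k * t)) t := by
      have := (Real.hasDerivAt_exp (k * t)).comp t ((hasDerivAt_id t).const_mul k)
      exact this.congr_deriv (by ring)
    have := h2.mul h3
    exact this.congr_deriv (by ring)
  have hconst : ∀ t : ℝ, f t = f 0 := by
    intro t
    have : ∀ x : ℝ, f x = f x := fun _ => rfl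
    have h := is_const_of_deriv_eq_zero (f := f)
      (fun x => (hderiv x).differentiableAt)
      (fun x => (hderiv x).deriv) t 0
    exact h
  intro t
  have h0' : f 0 = 0 := by simp [hf]; linarith
  have := hconst t
  rw [h0'] at this
  have hexp : Real.exp (k * t) ≠ 0 := Real.exp_ne_zero _
  have : E t + S t - Estar - Sstar = 0 := by
    rcases mul_eq_zero.mp this with h | h
    · exact h
    · exact absurd h hexp
  linarith
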